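/- For the line L = {(t, 1+t) : t ∈ C \ {0,−1}} ⊂ (C*)^2, the coamoeba Arg(L) ⊂ (R/2πZ)^2 has Lebesgue (Haar) measure equal to π^2. -/

import Mathlib

open MeasureTheory

instance : Fact (0 < 2 * Real.pi) := ⟨by positivity⟩

open Set Real

lemma div_sqrt_lt {a b c : ℝ} (hc : 0 < c) (hab : a < b) :
    a / Real.sqrt (a ^ 2 + c) < b / Real.sqrt (b ^ 2 + c) := by
  have ha' : 0 < a ^ 2 + c := by positivity
  have hb' : 0 < b ^ 2 + c := by positivity
  have hu : 0 < Real.sqrt (a ^ 2 + c) := Real.sqrt_pos.2 ha'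
  have hv : 0 < Real.sqrt (b ^ 2 + c) := Real.sqrt_pos.2 hb'
  have hu2 : Real.sqrt (a ^ 2 + c) ^ 2 = a ^ 2 + c := Real.sq_sqrt ha'.le
  have hv2 : Real.sqrt (b ^ 2 + c) ^ 2 = b ^ 2 + c := Real.sq_sqrt hb'.le
  rw [div_lt_div_iff₀ hu hv]
  set u := Real.sqrt (a ^ 2 + c)
  set v := Real.sqrt (b ^ 2 + c)
  rcases le_or_gt b 0 with hb | hb
  · have ha : a < 0 := hab.trans_le hb
    have e1 : (a * v) ^ 2 = a ^ 2 * (b ^ 2 + c) := by rw [mul_pow, hv2]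
    have e2 : (b * u) ^ 2 = b ^ 2 * (a ^ 2 + c) := by rw [mul_pow, hu2]
    have hab2 : b ^ 2 < a ^ 2 := by nlinarith
    have key : (b * u) ^ 2 < (a * v) ^ 2 := by nlinarith
    have h1 : 0 ≤ -(a * v) := by nlinarith
    have h2 : -(b * u) < -(a * v) := by
      apply lt_of_pow_lt_pow_left₀ 2 h1
      simpa using key
    linarith
  · rcases lt_or_ge a 0 with ha | ha
    · have h1 : a * v < 0 := mul_neg_of_neg_of_pos ha hv
      have h2 : 0 < b * u := mul_pos hb hu
      linarith
    · have e1 : (a * v) ^ 2 = a ^ 2 * (b ^ 2 + c) := by rw [mul_pow, hv2]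
      have e2 : (b * u) ^ 2 = b ^ 2 * (a ^ 2 + c) := by rw [mul_pow, hu2]
      have hab2 : a ^ 2 < b ^ 2 := by nlinarith
      have key : (a * v) ^ 2 < (b * u) ^ 2 := by nlinarith
      have h1 : 0 ≤ b * u := by positivity
      exact lt_of_pow_lt_pow_left₀ 2 h1 key

lemma re_div_abs_lt {z w : ℂ} (him : z.im = w.im) (hne : z.im ≠ 0) (hre : z.re < w.re) :
    z.re / ‖z‖ < w.re / ‖w‖ := by
  have habs : ∀ u : ℂ, ‖u‖ = Real.sqrt (u.re ^ 2 + u.im ^ 2) := by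
    intro u
    rw [Complex.norm_def, Complex.normSq_apply]
    ring_nf
  rw [habs z, habs w, ← him]
  exact div_sqrt_lt (by positivity) hre

lemma arg_mem_Ioo_of_im_pos {z : ℂ} (h : 0 < z.im) : Complex.arg z ∈ Ioo 0 π := by
  constructor
  · rcases (Complex.arg_nonneg_iff.2 h.le).lt_or_eq with h' | h'
    · exact h'
    · exfalso
      have := Complex.sin_arg z
      rw [← h'] at this
      simp only [Real.sin_zero] at this
      have hz : z ≠ 0 := fun hz => by simp [hz] at h
      have : z.im = 0 := by
        field_simp [norm_ne_zero_iff.mpr hz] at this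
        linarith [this]
      linarith
  · exact Complex.arg_lt_pi_iff.2 (Or.inr h.ne')

lemma re_div_abs_mem {z : ℂ} (hz : z ≠ 0) : z.re / ‖z‖ ∈ Icc (-1 : ℝ) 1 := by
  have h1 : |z.re / ‖z‖| ≤ 1 := by
    rw [abs_div, abs_of_nonneg (norm_nonneg z), div_le_one (norm_pos_iff.mpr hz)]
    exact Complex.abs_re_le_norm z
  exact abs_le.1 h1

lemma arg_lt_arg_of_im_pos {z w : ℂ} (him : z.im = w.im) (h0 : 0 < z.im) (hre : z.re < w.re) :
    Complex.arg w < Complex.arg z := by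
  have hz : z ≠ 0 := fun hz => by simp [hz] at h0
  have hw : w ≠ 0 := fun hw => by rw [hw] at him; simp at him; rw [him] at h0; linarith
  rw [Complex.arg_of_im_pos h0, Complex.arg_of_im_pos (him ▸ h0)]
  exact Real.strictAntiOn_arccos (re_div_abs_mem hz) (re_div_abs_mem hw)
    (re_div_abs_lt him h0.ne' hre)

lemma arg_lt_arg_of_im_neg {z w : ℂ} (him : z.im = w.im) (h0 : z.im < 0) (hre : z.re < w.re) :
    Complex.arg z < Complex.arg w := by
  have hz : z ≠ 0 := fun hz => by simp [hz] at h0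
  have hw : w ≠ 0 := fun hw => by rw [hw] at him; simp at him; rw [him] at h0; linarith
  rw [Complex.arg_of_im_neg h0, Complex.arg_of_im_neg (him ▸ h0)]
  exact neg_lt_neg (Real.strictAntiOn_arccos (re_div_abs_mem hz) (re_div_abs_mem hw)
    (re_div_abs_lt him h0.ne hre))

lemma exists_t {x y : ℝ} (hx : x ∈ Ioc (-π) π) (hy : y ∈ Ioc (-π) π)
    (hr : 0 < Real.sin y / Real.sin (x - y)) (hs : 0 < Real.sin x / Real.sin (x - y)) :
    ∃ t : ℂ, t ≠ 0 ∧ t ≠ -1 ∧ Complex.arg t = x ∧ Complex.arg (1 + t) = y := by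
  set r := Real.sin y / Real.sin (x - y) with hrdef
  set s := Real.sin x / Real.sin (x - y) with hsdef
  have hD : Real.sin (x - y) ≠ 0 := by
    intro h
    rw [hrdef, h, div_zero] at hr
    exact lt_irrefl 0 hr
  set t : ℂ := (r : ℂ) * (Complex.cos x + Complex.sin x * Complex.I) with htdef
  have hunit : ∀ θ : ℝ, (Complex.cos θ + Complex.sin θ * Complex.I : ℂ) ≠ 0 := by
    intro θ h
    have := Complex.norm_cos_add_sin_mul_I θ
    rw [h] at this
    simp at this
  have hadd : 1 + t = (s : ℂ) * (Complex.cos y + Complex.sin y * Complex.I) := by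
    rw [htdef, hrdef, hsdef, ← Complex.ofReal_cos, ← Complex.ofReal_sin,
      ← Complex.ofReal_cos y, ← Complex.ofReal_sin y]
    apply Complex.ext
    · simp only [Complex.add_re, Complex.mul_re, Complex.add_im, Complex.mul_im,
        Complex.one_re, Complex.ofReal_re, Complex.ofReal_im, Complex.I_re, Complex.I_im]
      field_simp
      rw [Real.sin_sub]
      ring
    · simp only [Complex.add_re, Complex.mul_re, Complex.add_im, Complex.mul_im,
        Complex.one_im, Complex.ofReal_re, Complex.ofReal_im, Complex.I_re, Complex.I_im]
      field_simp
      ring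
  refine ⟨t, mul_ne_zero (Complex.ofReal_ne_zero.2 hr.ne') (hunit x), ?_, ?_, ?_⟩
  · intro h
    rw [h] at hadd
    simp only [add_neg_cancel] at hadd
    exact mul_ne_zero (Complex.ofReal_ne_zero.2 hs.ne') (hunit y) hadd.symm
  · rw [htdef, Complex.arg_real_mul _ hr, Complex.arg_cos_add_sin_mul_I hx]
  · rw [hadd, Complex.arg_real_mul _ hs, Complex.arg_cos_add_sin_mul_I hy]

lemma coe_inj_Ioc {a b : ℝ} (ha : a ∈ Ioc (-π) π) (hb : b ∈ Ioc (-π) π)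
    (h : (a : AddCircle (2 * π)) = (b : AddCircle (2 * π))) : a = b := by
  rw [show ((a : AddCircle (2*π)) = (b : AddCircle (2*π))) ↔ a - b ∈ AddSubgroup.zmultiples (2*π) from QuotientAddGroup.eq_iff_sub_mem] at h
  obtain ⟨k, hk⟩ := AddSubgroup.mem_zmultiples_iff.1 h
  have hk' : (k : ℝ) * (2 * π) = a - b := by simpa [zsmul_eq_mul] using hk
  have hbound : |a - b| < 2 * π := by
    rw [abs_lt]
    constructor <;> [linarith [ha.1, hb.2]; linarith [ha.2, hb.1]]
  have hk0 : k = 0 := by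
    by_contra hk0
    have h1 : (1 : ℝ) ≤ |(k : ℝ)| := by
      exact_mod_cast Int.one_le_abs hk0
    have h2 : |a - b| = |(k : ℝ)| * (2 * π) := by
      rw [← hk', abs_mul, abs_of_pos (by positivity : (0:ℝ) < 2 * π)]
    nlinarith [Real.pi_pos]
  rw [hk0] at hk'
  simp at hk'
  linarith

def Tri1 : Set (ℝ × ℝ) := {q | 0 < q.2 ∧ q.2 < q.1 ∧ q.1 < Real.pi}
def Tri2 : Set (ℝ × ℝ) := {q | -Real.pi < q.1 ∧ q.1 < q.2 ∧ q.2 < 0}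

lemma tri1_open : IsOpen Tri1 :=
  (isOpen_lt continuous_const continuous_snd).inter
    ((isOpen_lt continuous_snd continuous_fst).inter (isOpen_lt continuous_fst continuous_const))

lemma tri2_open : IsOpen Tri2 :=
  (isOpen_lt continuous_const continuous_fst).inter
    ((isOpen_lt continuous_fst continuous_snd).inter (isOpen_lt continuous_snd continuous_const))

lemma tri1_volume : volume Tri1 = ENNReal.ofReal (π ^ 2 / 2) := by
  have h1 : Tri1 = regionBetween (fun _ => (0:ℝ)) id (Ioo 0 π) := by
    ext ⟨x, y⟩
    simp only [Tri1, regionBetween, mem_setOf_eq, mem_Ioo, id]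
    constructor
    · rintro ⟨h1, h2, h3⟩
      exact ⟨⟨h1.trans h2, h3⟩, h1, h2⟩
    · rintro ⟨⟨_, h3⟩, h1, h2⟩
      exact ⟨h1, h2, h3⟩
  have hint : IntegrableOn (id : ℝ → ℝ) (Ioo 0 π) volume :=
    (continuous_id.integrableOn_Icc).mono_set Ioo_subset_Icc_self
  have h0 : IntegrableOn (fun _ => (0:ℝ)) (Ioo 0 π) volume := integrableOn_zero
  rw [h1, Measure.volume_eq_prod, volume_regionBetween_eq_integral h0 hint measurableSet_Ioo
    (fun x hx => hx.1.le)]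
  congr 1
  simp only [Pi.sub_apply, id_eq, sub_zero]
  rw [← integral_Ioc_eq_integral_Ioo, ← intervalIntegral.integral_of_le Real.pi_pos.le,
    integral_id]
  ring

lemma tri2_volume : volume Tri2 = ENNReal.ofReal (π ^ 2 / 2) := by
  have h1 : Tri2 = regionBetween id (fun _ => (0:ℝ)) (Ioo (-π) 0) := by
    ext ⟨x, y⟩
    simp only [Tri2, regionBetween, mem_setOf_eq, mem_Ioo, id]
    constructor
    · rintro ⟨h1, h2, h3⟩
      exact ⟨⟨h1, h2.trans h3⟩, h2, h3⟩
    · rintro ⟨⟨h1, _⟩, h2, h3⟩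
      exact ⟨h1, h2, h3⟩
  have hint : IntegrableOn (id : ℝ → ℝ) (Ioo (-π) 0) volume :=
    (continuous_id.integrableOn_Icc).mono_set Ioo_subset_Icc_self
  have h0 : IntegrableOn (fun _ => (0:ℝ)) (Ioo (-π) 0) volume := integrableOn_zero
  rw [h1, Measure.volume_eq_prod, volume_regionBetween_eq_integral hint h0 measurableSet_Ioo
    (fun x hx => hx.2.le)]
  congr 1
  simp only [Pi.sub_apply, id_eq, zero_sub]
  rw [← integral_Ioc_eq_integral_Ioo, ← intervalIntegral.integral_of_le
    (by linarith [Real.pi_pos] : (-π) ≤ 0), intervalIntegral.integral_neg, integral_id]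
  ring_nf

def Fpts : Set (ℝ × ℝ) := {((0:ℝ), (0:ℝ)), (Real.pi, 0), (Real.pi, Real.pi)}

noncomputable def Phi : ℝ × ℝ → AddCircle (2 * Real.pi) × AddCircle (2 * Real.pi) :=
  fun q => ((q.1 : AddCircle (2 * Real.pi)), (q.2 : AddCircle (2 * Real.pi)))

lemma coamoeba_eq :
    {p : AddCircle (2 * Real.pi) × AddCircle (2 * Real.pi) |
        ∃ t : ℂ, t ≠ 0 ∧ t ≠ -1 ∧
          p.1 = (Complex.arg t : AddCircle (2 * Real.pi)) ∧
          p.2 = (Complex.arg (1 + t) : AddCircle (2 * Real.pi))} =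
      Phi '' Tri1 ∪ Phi '' Tri2 ∪ Phi '' Fpts := by
  ext p
  constructor
  · rintro ⟨t, ht0, ht1, h1, h2⟩
    have hp : p = Phi (Complex.arg t, Complex.arg (1 + t)) := Prod.ext h1 h2
    have him1 : (1 + t).im = t.im := by simp
    have hre1 : t.re < (1 + t).re := by simp [Complex.add_re]
    rcases lt_trichotomy t.im 0 with him | him | him
    · refine Or.inl (Or.inr ⟨_, ?_, hp.symm⟩)
      exact ⟨Complex.neg_pi_lt_arg t,
        arg_lt_arg_of_im_neg him1.symm him hre1,
        Complex.arg_neg_iff.2 (him1 ▸ him)⟩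
    · -- real case
      have hret : t = ((t.re : ℝ) : ℂ) := Complex.ext rfl (by simp [him])
      have hre0 : t.re ≠ 0 := fun h => ht0 (by rw [hret, h]; simp)
      have hrem1 : t.re ≠ -1 := fun h => ht1 (by rw [hret, h]; norm_num)
      refine Or.inr ?_
      rcases lt_or_gt_of_ne hre0 with hneg | hpos
      · have hargt : Complex.arg t = π := by rw [hret]; exact Complex.arg_ofReal_of_neg hneg
        have h1t : (1 + t) = ((1 + t.re : ℝ) : ℂ) := Complex.ext (by simp) (by simp [him])
        rcases lt_or_gt_of_ne hrem1 with hlt | hgt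
        · -- t.re < -1 : point (π, π)
          have harg1 : Complex.arg (1 + t) = π := by
            rw [h1t]; exact Complex.arg_ofReal_of_neg (by linarith)
          exact ⟨(π, π), by simp [Fpts], by rw [hp, hargt, harg1]⟩
        · -- -1 < t.re < 0 : point (π, 0)
          have harg1 : Complex.arg (1 + t) = 0 := by
            rw [h1t]; exact Complex.arg_ofReal_of_nonneg (by linarith)
          exact ⟨(π, 0), by simp [Fpts], by rw [hp, hargt, harg1]⟩
      · have hargt : Complex.arg t = 0 := by
          rw [hret]; exact Complex.arg_ofReal_of_nonneg hpos.le
        have h1t : (1 + t) = ((1 + t.re : ℝ) : ℂ) := Complex.ext (by simp) (by simp [him])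
        have harg1 : Complex.arg (1 + t) = 0 := by
          rw [h1t]; exact Complex.arg_ofReal_of_nonneg (by linarith)
        exact ⟨(0, 0), by simp [Fpts], by rw [hp, hargt, harg1]⟩
    · refine Or.inl (Or.inl ⟨_, ?_, hp.symm⟩)
      have h1pos : 0 < (1 + t).im := him1 ▸ him
      exact ⟨(arg_mem_Ioo_of_im_pos h1pos).1,
        arg_lt_arg_of_im_pos him1.symm him hre1,
        (arg_mem_Ioo_of_im_pos him).2⟩
  · rintro ((⟨⟨x, y⟩, ⟨hy0, hyx, hxpi⟩, rfl⟩ | ⟨⟨x, y⟩, ⟨hxpi, hxy, hy0⟩, rfl⟩) | hmem)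
    · have hx0 : 0 < x := hy0.trans hyx
      have hsx : 0 < Real.sin x := Real.sin_pos_of_pos_of_lt_pi hx0 hxpi
      have hsy : 0 < Real.sin y := Real.sin_pos_of_pos_of_lt_pi hy0 (hyx.trans hxpi)
      have hsd : 0 < Real.sin (x - y) :=
        Real.sin_pos_of_pos_of_lt_pi (by linarith) (by linarith)
      obtain ⟨t, ht0, ht1, ha1, ha2⟩ := exists_t
        (⟨by linarith [Real.pi_pos], hxpi.le⟩ : x ∈ Ioc (-π) π)
        (⟨by linarith [Real.pi_pos], by linarith⟩ : y ∈ Ioc (-π) π)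
        (div_pos hsy hsd) (div_pos hsx hsd)
      exact ⟨t, ht0, ht1, by simp [Phi, ha1], by simp [Phi, ha2]⟩
    · have hy0' : y < 0 := hy0
      have hx0 : x < 0 := hxy.trans hy0'
      have hsx : Real.sin x < 0 := Real.sin_neg_of_neg_of_neg_pi_lt hx0 hxpi
      have hsy : Real.sin y < 0 := Real.sin_neg_of_neg_of_neg_pi_lt hy0' (by linarith)
      have hsd : Real.sin (x - y) < 0 :=
        Real.sin_neg_of_neg_of_neg_pi_lt (by linarith) (by linarith)
      obtain ⟨t, ht0, ht1, ha1, ha2⟩ := exists_t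
        (⟨hxpi, by linarith [Real.pi_pos]⟩ : x ∈ Ioc (-π) π)
        (⟨by linarith, by linarith [Real.pi_pos]⟩ : y ∈ Ioc (-π) π)
        (div_pos_of_neg_of_neg hsy hsd) (div_pos_of_neg_of_neg hsx hsd)
      exact ⟨t, ht0, ht1, by simp [Phi, ha1], by simp [Phi, ha2]⟩
    · obtain ⟨⟨x, y⟩, hxy, rfl⟩ := hmem
      simp only [Fpts, mem_insert_iff, mem_singleton_iff, Prod.mk.injEq] at hxy
      rcases hxy with ⟨rfl, rfl⟩ | ⟨rfl, rfl⟩ | ⟨rfl, rfl⟩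
      · -- (0,0), witness t = 1
        have ha2 : Complex.arg (1 + 1 : ℂ) = 0 := by
          rw [show (1 + 1 : ℂ) = ((2 : ℝ) : ℂ) by norm_num]
          exact Complex.arg_ofReal_of_nonneg (by norm_num)
        refine ⟨1, one_ne_zero, by norm_num, ?_, ?_⟩
        · simp only [Phi]; rw [Complex.arg_one]
        · simp only [Phi]; rw [ha2]
      · -- (π, 0), witness t = -1/2
        have ha1 : Complex.arg ((-1/2 : ℝ) : ℂ) = π :=
          Complex.arg_ofReal_of_neg (by norm_num)
        have ha2 : Complex.arg (1 + ((-1/2 : ℝ) : ℂ)) = 0 := by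
          rw [show (1 + ((-1/2 : ℝ) : ℂ)) = ((1/2 : ℝ) : ℂ) by push_cast; ring]
          exact Complex.arg_ofReal_of_nonneg (by norm_num)
        refine ⟨((-1/2 : ℝ) : ℂ), by norm_num, ?_, ?_, ?_⟩
        · intro hc
          rw [show (-1 : ℂ) = ((-1 : ℝ) : ℂ) by norm_num] at hc
          have := Complex.ofReal_injective hc
          norm_num at this
        · simp only [Phi]; rw [ha1]
        · simp only [Phi]; rw [ha2]
      · -- (π, π), witness t = -2
        have ha1 : Complex.arg ((-2 : ℝ) : ℂ) = π :=
          Complex.arg_ofReal_of_neg (by norm_num)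
        have ha2 : Complex.arg (1 + ((-2 : ℝ) : ℂ)) = π := by
          rw [show (1 + ((-2 : ℝ) : ℂ)) = ((-1 : ℝ) : ℂ) by push_cast; ring]
          exact Complex.arg_ofReal_of_neg (by norm_num)
        refine ⟨((-2 : ℝ) : ℂ), by norm_num, ?_, ?_, ?_⟩
        · intro hc
          rw [show (-1 : ℂ) = ((-1 : ℝ) : ℂ) by norm_num] at hc
          have := Complex.ofReal_injective hc
          norm_num at this
        · simp only [Phi]; rw [ha1]
        · simp only [Phi]; rw [ha2]

lemma tri1_subset_box : Tri1 ⊆ Ioc (-π) π ×ˢ Ioc (-π) π := by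
  rintro ⟨x, y⟩ ⟨h1, h2, h3⟩
  exact ⟨⟨by linarith [Real.pi_pos], h3.le⟩, ⟨by linarith [Real.pi_pos], by linarith⟩⟩

lemma tri2_subset_box : Tri2 ⊆ Ioc (-π) π ×ˢ Ioc (-π) π := by
  rintro ⟨x, y⟩ ⟨h1, h2, h3⟩
  exact ⟨⟨h1, by linarith [Real.pi_pos]⟩, ⟨by linarith, by linarith [Real.pi_pos]⟩⟩

lemma fpts_subset_box : Fpts ⊆ Ioc (-π) π ×ˢ Ioc (-π) π := by
  rintro ⟨x, y⟩ h
  simp only [Fpts, mem_insert_iff, mem_singleton_iff, Prod.mk.injEq] at h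
  have h0 : (0 : ℝ) ∈ Ioc (-π) π := ⟨by linarith [Real.pi_pos], Real.pi_pos.le⟩
  have hπ : π ∈ Ioc (-π) π := ⟨by linarith [Real.pi_pos], le_refl π⟩
  rcases h with ⟨rfl, rfl⟩ | ⟨rfl, rfl⟩ | ⟨rfl, rfl⟩
  · exact ⟨h0, h0⟩
  · exact ⟨hπ, h0⟩
  · exact ⟨hπ, hπ⟩

lemma preimage_box (A : Set (ℝ × ℝ)) (hA : A ⊆ Ioc (-π) π ×ˢ Ioc (-π) π) :
    Phi ⁻¹' (Phi '' A) ∩ Ioc (-π) π ×ˢ Ioc (-π) π = A := by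
  apply Subset.antisymm
  · rintro ⟨a, b⟩ ⟨⟨⟨x, y⟩, hxy, heq⟩, hbox⟩
    obtain ⟨hx, hy⟩ := hA hxy
    have hx' : x ∈ Ioc (-π) π := hx
    have hy' : y ∈ Ioc (-π) π := hy
    have ha' : a ∈ Ioc (-π) π := hbox.1
    have hb' : b ∈ Ioc (-π) π := hbox.2
    have h1 : (x : AddCircle (2 * π)) = (a : AddCircle (2 * π)) :=
      congrArg Prod.fst heq
    have h2 : (y : AddCircle (2 * π)) = (b : AddCircle (2 * π)) :=
      congrArg Prod.snd heq
    rw [coe_inj_Ioc hx' ha' h1, coe_inj_Ioc hy' hb' h2] at hxy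
    exact hxy
  · intro q hq
    exact ⟨mem_image_of_mem _ hq, hA hq⟩

/-- The coamoeba of the line {(t, 1+t)} ⊂ (ℂ*)² has measure π² in the
torus (ℝ/2πℤ)². -/
theorem coamoeba_of_line_volume :
    volume {p : AddCircle (2 * Real.pi) × AddCircle (2 * Real.pi) |
        ∃ t : ℂ, t ≠ 0 ∧ t ≠ -1 ∧
          p.1 = (Complex.arg t : AddCircle (2 * Real.pi)) ∧
          p.2 = (Complex.arg (1 + t) : AddCircle (2 * Real.pi))} =
      ENNReal.ofReal (Real.pi ^ 2) := by
  rw [coamoeba_eq]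
  have hmk : IsOpenMap ((↑) : ℝ → AddCircle (2 * π)) := QuotientAddGroup.isOpenMap_coe
  have hPhiOpen : IsOpenMap Phi := hmk.prodMap hmk
  have hPhiCont : Continuous Phi :=
    ((AddCircle.continuous_mk' _).comp continuous_fst).prodMk
      ((AddCircle.continuous_mk' _).comp continuous_snd)
  have hFfin : (Phi '' Fpts).Finite := by
    apply Set.Finite.image
    simp only [Fpts]
    exact (finite_singleton _).insert _ |>.insert _
  have hS_meas : MeasurableSet (Phi '' Tri1 ∪ Phi '' Tri2 ∪ Phi '' Fpts) :=
    (((hPhiOpen _ tri1_open).measurableSet.union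
      (hPhiOpen _ tri2_open).measurableSet).union hFfin.isClosed.measurableSet)
  have hmp : MeasurePreserving Phi
      ((volume.restrict (Ioc (-π) π)).prod (volume.restrict (Ioc (-π) π)))
      volume := by
    have h := (AddCircle.measurePreserving_mk (2*π) (-π)).prod
      (AddCircle.measurePreserving_mk (2*π) (-π))
    rw [show -π + 2*π = π by ring] at h
    rw [Measure.volume_eq_prod (AddCircle (2*π)) (AddCircle (2*π))]
    exact h
  have hpre_meas : MeasurableSet (Phi ⁻¹' (Phi '' Tri1 ∪ Phi '' Tri2 ∪ Phi '' Fpts)) :=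
    hS_meas.preimage hPhiCont.measurable
  have hbox : Phi ⁻¹' (Phi '' Tri1 ∪ Phi '' Tri2 ∪ Phi '' Fpts) ∩
      Ioc (-π) π ×ˢ Ioc (-π) π = Tri1 ∪ Tri2 ∪ Fpts := by
    rw [preimage_union, preimage_union, union_inter_distrib_right,
      union_inter_distrib_right, preimage_box _ tri1_subset_box,
      preimage_box _ tri2_subset_box, preimage_box _ fpts_subset_box]
  have hsing : ∀ p : ℝ × ℝ, volume ({p} : Set (ℝ × ℝ)) = 0 := by
    intro p
    rw [← Set.singleton_prod_singleton, Measure.volume_eq_prod, Measure.prod_prod,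
      Real.volume_singleton, zero_mul]
  have hF0 : volume Fpts = 0 := by
    simp only [Fpts, Set.insert_eq]
    exact measure_union_null (hsing _) (measure_union_null (hsing _) (hsing _))
  have hdisj : Disjoint Tri1 Tri2 := by
    rw [Set.disjoint_left]
    rintro ⟨x, y⟩ ⟨h1, _, _⟩ ⟨_, _, h2⟩
    exact lt_irrefl 0 (h1.trans h2)
  calc volume (Phi '' Tri1 ∪ Phi '' Tri2 ∪ Phi '' Fpts)
      = ((volume.restrict (Ioc (-π) π)).prod (volume.restrict (Ioc (-π) π)))
        (Phi ⁻¹' (Phi '' Tri1 ∪ Phi '' Tri2 ∪ Phi '' Fpts)) :=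
        (hmp.measure_preimage hS_meas.nullMeasurableSet).symm
    _ = volume (Tri1 ∪ Tri2 ∪ Fpts) := by
        rw [Measure.prod_restrict, Measure.restrict_apply hpre_meas, hbox,
          ← Measure.volume_eq_prod]
    _ = volume (Tri1 ∪ Tri2) :=
        le_antisymm ((measure_union_le _ _).trans (by rw [hF0, add_zero]))
          (measure_mono subset_union_left)
    _ = volume Tri1 + volume Tri2 := measure_union hdisj tri2_open.measurableSet
    _ = ENNReal.ofReal (π ^ 2) := by
        rw [tri1_volume, tri2_volume,
          ← ENNReal.ofReal_add (by positivity) (by positivity)]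
        congr 1
        ring
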